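/- If G is a connected graph with minimum degree at least 2 that is neither a tree nor a cycle, and (−ρ(K)y, y)^T is an eigenvector of K for its spectral radius ρ(K), then y can be chosen to be entrywise positive. -/

import Mathlib

set_option linter.unusedSectionVars false
set_option maxHeartbeats 1000000

open Matrix

namespace PerronAux

variable {n : Type*} [Fintype n] [DecidableEq n]

/-- If a nonzero vector is an eigenvector, the eigenvalue is in the spectrum. -/
lemma mem_spectrum_of_eigen {M : Matrix n n ℂ} {μ : ℂ} {w : n → ℂ}
    (hw : w ≠ 0) (h : M *ᵥ w = μ • w) : μ ∈ spectrum ℂ M := by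
  rw [spectrum.mem_iff]
  intro hu
  have hXw : (algebraMap ℂ (Matrix n n ℂ) μ - M) *ᵥ w = 0 := by
    rw [sub_mulVec, Algebra.algebraMap_eq_smul_one, smul_mulVec, one_mulVec, h, sub_self]
  have : w = 0 := by
    calc w = (1 : Matrix n n ℂ) *ᵥ w := (one_mulVec w).symm
    _ = ((↑hu.unit⁻¹ : Matrix n n ℂ) * (algebraMap ℂ (Matrix n n ℂ) μ - M)) *ᵥ w := by
        rw [hu.val_inv_mul]
    _ = (↑hu.unit⁻¹ : Matrix n n ℂ) *ᵥ ((algebraMap ℂ (Matrix n n ℂ) μ - M) *ᵥ w) := by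
        rw [mulVec_mulVec]
    _ = 0 := by rw [hXw, mulVec_zero]
  exact hw this

/-- Real version. -/
lemma mem_spectrum_map_of_eigen {M : Matrix n n ℝ} {t : ℝ} {w : n → ℝ}
    (hw : w ≠ 0) (h : M *ᵥ w = t • w) :
    (t : ℂ) ∈ spectrum ℂ (M.map Complex.ofReal) := by
  apply mem_spectrum_of_eigen (w := fun i => (w i : ℂ))
  · intro h0
    apply hw
    funext i
    have := congrFun h0 i
    simpa using this
  · funext i
    have hwi := congrFun h i
    simp only [mulVec, dotProduct, Pi.smul_apply, smul_eq_mul] at hwi ⊢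
    push_cast [Matrix.map_apply]
    exact_mod_cast congrArg (Complex.ofReal) hwi

/-- A maximizer of the Rayleigh quotient of a real symmetric matrix is an eigenvector. -/
lemma eigen_of_rayleigh_max {M : Matrix n n ℝ} (hM : M.IsHermitian) {t : ℝ}
    (hub : ∀ v : n → ℝ, v ⬝ᵥ (M *ᵥ v) ≤ t * (v ⬝ᵥ v))
    {x : n → ℝ} (hx : t * (x ⬝ᵥ x) ≤ x ⬝ᵥ (M *ᵥ x)) : M *ᵥ x = t • x := by
  have hkey : ∀ v : n → ℝ, v ⬝ᵥ ((t • (1 : Matrix n n ℝ) - M) *ᵥ v)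
      = t * (v ⬝ᵥ v) - v ⬝ᵥ (M *ᵥ v) := by
    intro v
    rw [sub_mulVec, dotProduct_sub, smul_mulVec, one_mulVec, dotProduct_smul, smul_eq_mul]
  have hpsd : (t • (1 : Matrix n n ℝ) - M).PosSemidef := by
    refine PosSemidef.of_dotProduct_mulVec_nonneg ?_ fun v => ?_
    · rw [Matrix.IsHermitian, conjTranspose_sub, conjTranspose_smul, conjTranspose_one,
        hM.eq, star_trivial]
    · rw [star_trivial, hkey]
      have := hub v
      linarith
  have h0 : (t • (1 : Matrix n n ℝ) - M) *ᵥ x = 0 := by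
    rw [← hpsd.dotProduct_mulVec_zero_iff, star_trivial, hkey]
    have h2 := hpsd.dotProduct_mulVec_nonneg x
    rw [star_trivial, hkey] at h2
    linarith
  rw [sub_mulVec, smul_mulVec, one_mulVec, sub_eq_zero] at h0
  exact h0.symm

/-- Scaling: a bound on the unit sphere gives a global Rayleigh bound. -/
lemma rayleigh_bound_of_sphere {M : Matrix n n ℝ} {t : ℝ}
    (h : ∀ x : n → ℝ, x ⬝ᵥ x = 1 → x ⬝ᵥ (M *ᵥ x) ≤ t) :
    ∀ v : n → ℝ, v ⬝ᵥ (M *ᵥ v) ≤ t * (v ⬝ᵥ v) := by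
  intro v
  rcases eq_or_ne v 0 with rfl | hv
  · simp
  · have hvv : 0 < v ⬝ᵥ v := by
      obtain ⟨i, hi⟩ := Function.ne_iff.mp hv
      have hi0 : v i ≠ 0 := by simpa using hi
      have hi' : v i * v i ≠ 0 := mul_ne_zero hi0 hi0
      have hterm : ∀ j, 0 ≤ v j * v j := fun j => mul_self_nonneg _
      rw [dotProduct]
      exact Finset.sum_pos' (fun j _ => hterm j) ⟨i, Finset.mem_univ i,
        lt_of_le_of_ne (hterm i) (Ne.symm hi')⟩
    set r : ℝ := Real.sqrt (v ⬝ᵥ v) with hrdef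
    have hr : 0 < r := Real.sqrt_pos.mpr hvv
    have hr2 : r * r = v ⬝ᵥ v := Real.mul_self_sqrt hvv.le
    have hx := h (r⁻¹ • v) ?_
    · rw [mulVec_smul, smul_dotProduct, dotProduct_smul, smul_eq_mul, smul_eq_mul] at hx
      have h2 : v ⬝ᵥ (M *ᵥ v) ≤ t * (r * r) := by
        have hrne : r ≠ 0 := ne_of_gt hr
        have := mul_le_mul_of_nonneg_left hx (mul_pos hr hr).le
        calc v ⬝ᵥ (M *ᵥ v) = (r * r) * (r⁻¹ * (r⁻¹ * (v ⬝ᵥ M *ᵥ v))) := by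
              field_simp
        _ ≤ (r * r) * t := this
        _ = t * (r * r) := by ring
      rw [hr2] at h2
      exact h2
    · rw [smul_dotProduct, dotProduct_smul, smul_eq_mul, smul_eq_mul, ← hr2]
      field_simp

end PerronAux

section ContextLemmas

open Matrix PerronAux

/-- The matrix `K = [[A, D-I], [-I, 0]]` (over the reals). -/
def Kmatrix {V : Type*} [Fintype V] [DecidableEq V] (G : SimpleGraph V)
    [DecidableRel G.Adj] : Matrix (V ⊕ V) (V ⊕ V) ℝ :=
  Matrix.fromBlocks (G.adjMatrix ℝ) (Matrix.diagonal (fun v => (G.degree v : ℝ)) - 1) (-1) 0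

variable {V : Type*} [Fintype V] [DecidableEq V]

lemma diag_sub_one_eq (G : SimpleGraph V) [DecidableRel G.Adj] :
    Matrix.diagonal (fun v => (G.degree v : ℝ)) - 1
      = Matrix.diagonal (fun v => (G.degree v : ℝ) - 1) := by
  rw [← Matrix.diagonal_one, Matrix.diagonal_sub]

lemma sum_elim_eq_iff {α : Type*} (f f' g g' : V → α) :
    Sum.elim f g = Sum.elim f' g' ↔ f = f' ∧ g = g' := by
  constructor
  · intro h
    exact ⟨funext fun v => congrFun h (Sum.inl v), funext fun v => congrFun h (Sum.inr v)⟩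
  · rintro ⟨rfl, rfl⟩; rfl

lemma K_eigen_iff (G : SimpleGraph V) [DecidableRel G.Adj] {t : ℝ} (ht : t ≠ 0) (x : V → ℝ) :
    Kmatrix G *ᵥ Sum.elim (fun v => -t * x v) x = t • Sum.elim (fun v => -t * x v) x ↔
    (G.adjMatrix ℝ - t⁻¹ • Matrix.diagonal (fun v => (G.degree v : ℝ) - 1)) *ᵥ x = t • x := by
  have hfun : (fun v => -t * x v) = (-t) • x := by
    funext v; simp [smul_eq_mul]
  have hsmul : t • Sum.elim ((-t) • x) x = Sum.elim (t • ((-t) • x)) (t • x) := by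
    funext i; cases i <;> rfl
  rw [Kmatrix, diag_sub_one_eq, hfun, fromBlocks_mulVec, hsmul, sum_elim_eq_iff]
  have hrow2 : (-1 : Matrix V V ℝ) *ᵥ ((-t) • x) + (0 : Matrix V V ℝ) *ᵥ x = t • x := by
    rw [neg_mulVec, one_mulVec, zero_mulVec, add_zero, ← neg_smul, neg_neg]
  constructor
  · rintro ⟨h1, -⟩
    funext v
    have hv := congrFun h1 v
    simp only [Sum.elim_comp_inl, Sum.elim_comp_inr, mulVec_smul, Pi.add_apply,
      Pi.smul_apply, smul_eq_mul, mulVec_diagonal,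
      SimpleGraph.adjMatrix_mulVec_apply, ← Finset.mul_sum] at hv
    simp only [sub_mulVec, smul_mulVec, Pi.sub_apply, Pi.smul_apply, smul_eq_mul,
      mulVec_diagonal, SimpleGraph.adjMatrix_mulVec_apply, ← Finset.mul_sum]
    field_simp at hv ⊢
    nlinarith [hv]
  · intro h1
    refine ⟨?_, hrow2⟩
    funext v
    have hv := congrFun h1 v
    simp only [sub_mulVec, smul_mulVec, Pi.sub_apply, Pi.smul_apply, smul_eq_mul,
      mulVec_diagonal, SimpleGraph.adjMatrix_mulVec_apply, ← Finset.mul_sum] at hv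
    simp only [Sum.elim_comp_inl, Sum.elim_comp_inr, mulVec_smul, Pi.add_apply,
      Pi.smul_apply, smul_eq_mul, mulVec_diagonal,
      SimpleGraph.adjMatrix_mulVec_apply, ← Finset.mul_sum]
    field_simp at hv ⊢
    nlinarith [hv]

end ContextLemmas

open PerronAux

/-- If `G` is a connected graph with minimum degree at least 2 that is neither a tree nor a
cycle, and `ρ` is the spectral radius of `K = [[A, D-I], [-I, 0]]` (an eigenvalue of `K`
whose modulus dominates all eigenvalues), then `K` has an eigenvector of the form
`(-ρ y, y)ᵀ` for `ρ` in which `y` is entrywise positive. -/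
theorem perron_vector_Kmatrix_positive {V : Type*} [Fintype V] [DecidableEq V]
    (G : SimpleGraph V) [DecidableRel G.Adj] (hconn : G.Connected)
    (hdeg : ∀ v : V, 2 ≤ G.degree v) (htree : ¬ G.IsTree)
    (hcyc : ¬ ∃ n : ℕ, Nonempty (G ≃g SimpleGraph.cycleGraph n))
    (ρ : ℝ) (hρ : ((ρ : ℂ)) ∈ spectrum ℂ ((Kmatrix G).map Complex.ofReal))
    (hmax : ∀ μ ∈ spectrum ℂ ((Kmatrix G).map Complex.ofReal), ‖μ‖ ≤ ρ)
    (hexists : ∃ y : V → ℝ, y ≠ 0 ∧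
      Kmatrix G *ᵥ Sum.elim (fun v => -ρ * y v) y = ρ • Sum.elim (fun v => -ρ * y v) y) :
    ∃ y : V → ℝ, (∀ v : V, 0 < y v) ∧
      Kmatrix G *ᵥ Sum.elim (fun v => -ρ * y v) y = ρ • Sum.elim (fun v => -ρ * y v) y := by
  classical
  obtain ⟨y, hy0, hyK⟩ := hexists
  set c : V → ℝ := fun v => (G.degree v : ℝ) - 1 with hc
  have hc1 : ∀ v, (1 : ℝ) ≤ c v := by
    intro v
    have h2 := hdeg v
    have : (2 : ℝ) ≤ (G.degree v : ℝ) := by exact_mod_cast h2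
    simp only [hc]; linarith
  -- ρ is nonnegative
  have hρ0 : 0 ≤ ρ := le_trans (abs_nonneg ρ) (by simpa using hmax ρ hρ)
  -- ρ is nonzero
  have hρne : ρ ≠ 0 := by
    rintro rfl
    apply hy0
    rw [Kmatrix, diag_sub_one_eq] at hyK
    have hfun : (fun v => -(0:ℝ) * y v) = Sum.elim (fun _ : V => (0:ℝ)) y ∘ Sum.inl := by
      funext v; simp
    funext v
    have h1 := congrFun hyK (Sum.inl v)
    have hzz : (fun v => -(0:ℝ) * y v) = (fun _ : V => (0:ℝ)) := by funext w; ring_nf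
    rw [hzz, fromBlocks_mulVec] at h1
    simp only [Sum.elim_comp_inl, Sum.elim_comp_inr, Pi.add_apply, mulVec_diagonal,
      Sum.elim_inl, Pi.smul_apply, smul_eq_mul, zero_mul] at h1
    have hA0 : (G.adjMatrix ℝ *ᵥ (fun _ : V => (0:ℝ))) v = 0 := by
      simp [SimpleGraph.adjMatrix_mulVec_apply]
    rw [hA0] at h1
    have hcv : (1:ℝ) ≤ (G.degree v : ℝ) - 1 := hc1 v
    have hcy : ((G.degree v : ℝ) - 1) * y v = 0 := by linarith
    rcases mul_eq_zero.mp hcy with h | h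
    · linarith
    · exact h
  have hρpos : 0 < ρ := lt_of_le_of_ne hρ0 (Ne.symm hρne)
  -- the symmetric matrix family
  set M : ℝ → Matrix V V ℝ := fun t => G.adjMatrix ℝ - t⁻¹ • Matrix.diagonal c with hM
  have hMherm : ∀ t, (M t).IsHermitian := by
    intro t
    rw [Matrix.IsHermitian, conjTranspose_eq_transpose_of_trivial, transpose_sub,
      transpose_smul, diagonal_transpose, SimpleGraph.transpose_adjMatrix]
  have hMy : M ρ *ᵥ y = ρ • y := (K_eigen_iff G hρne y).mp hyK
  -- no eigenvalue of M t for t > ρ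
  have hnoeig : ∀ t : ℝ, ρ < t → ∀ x : V → ℝ, x ≠ 0 → M t *ᵥ x ≠ t • x := by
    intro t ht x hx heig
    have hK := (K_eigen_iff G (by nlinarith : t ≠ 0) x).mpr heig
    have hw : Sum.elim (fun v => -t * x v) x ≠ 0 := by
      intro h0
      apply hx
      funext v
      exact congrFun h0 (Sum.inr v)
    have hspec := mem_spectrum_map_of_eigen hw hK
    have := hmax _ hspec
    rw [Complex.norm_real, Real.norm_eq_abs, abs_of_pos (lt_trans hρpos ht)] at this
    linarith
  -- the sphere
  set S : Set (V → ℝ) := {x : V → ℝ | x ⬝ᵥ x = 1} with hS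
  have hdot_sq : ∀ x : V → ℝ, x ⬝ᵥ x = ∑ v, x v ^ 2 := by
    intro x; simp [dotProduct, sq]
  have hSne : S.Nonempty := by
    have : Nonempty V := hconn.nonempty
    obtain ⟨v0⟩ := this
    refine ⟨Pi.single v0 1, ?_⟩
    simp only [hS, Set.mem_setOf_eq, hdot_sq]
    rw [Finset.sum_eq_single v0]
    · simp
    · intro b _ hb; simp [Pi.single_apply, hb]
    · intro h; exact absurd (Finset.mem_univ v0) h
  have hcont : ∀ B : Matrix V V ℝ, Continuous (fun x : V → ℝ => x ⬝ᵥ (B *ᵥ x)) := by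
    intro B
    unfold dotProduct mulVec
    exact continuous_finset_sum _ fun u _ => (continuous_apply u).mul
      (continuous_finset_sum _ fun w _ => continuous_const.mul (continuous_apply w))
  have hSbd : ∀ x ∈ S, ∀ v, |x v| ≤ 1 := by
    intro x hx v
    have h1 : x v ^ 2 ≤ 1 := by
      rw [hS, Set.mem_setOf_eq, hdot_sq] at hx
      rw [← hx]
      exact Finset.single_le_sum (fun w _ => sq_nonneg (x w)) (Finset.mem_univ v)
    rw [abs_le]; constructor <;> nlinarith
  have hScompact : IsCompact S := by
    have hclosed : IsClosed S := isClosed_eq (by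
        unfold dotProduct
        exact continuous_finset_sum _ fun u _ => (continuous_apply u).mul (continuous_apply u))
      continuous_const
    apply Metric.isCompact_of_isClosed_isBounded hclosed
    rw [Metric.isBounded_iff_subset_closedBall 0]
    refine ⟨1, fun x hx => ?_⟩
    rw [Metric.mem_closedBall, dist_zero_right]
    exact pi_norm_le_iff_of_nonneg zero_le_one |>.mpr fun v => by
      simpa [Real.norm_eq_abs] using hSbd x hx v
  -- Rayleigh quotient expansion
  have hq1 : ∀ (t : ℝ) (x : V → ℝ), x ⬝ᵥ (M t *ᵥ x)
      = x ⬝ᵥ (G.adjMatrix ℝ *ᵥ x) - t⁻¹ * ∑ v, c v * x v ^ 2 := by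
    intro t x
    simp only [hM]
    rw [sub_mulVec, dotProduct_sub, smul_mulVec, dotProduct_smul, smul_eq_mul]
    congr 2
    rw [dotProduct]
    refine Finset.sum_congr rfl fun v _ => ?_
    rw [mulVec_diagonal]; ring
  have hAqexp : ∀ x : V → ℝ, x ⬝ᵥ (G.adjMatrix ℝ *ᵥ x)
      = ∑ u, ∑ w, (G.adjMatrix ℝ) u w * (x u * x w) := by
    intro x
    rw [dotProduct]
    refine Finset.sum_congr rfl fun u _ => ?_
    rw [mulVec, dotProduct, Finset.mul_sum]
    refine Finset.sum_congr rfl fun w _ => by ring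
  have hAnn : ∀ u w : V, (0:ℝ) ≤ G.adjMatrix ℝ u w := by
    intro u w
    by_cases h : G.Adj u w <;> simp [SimpleGraph.adjMatrix_apply, h]
  set N : ℝ := (Fintype.card V : ℝ) with hN
  have hN0 : 0 ≤ N := by positivity
  have hAbound : ∀ x ∈ S, x ⬝ᵥ (G.adjMatrix ℝ *ᵥ x) ≤ N ^ 2 := by
    intro x hx
    rw [hAqexp]
    have hterm : ∀ u w : V, (G.adjMatrix ℝ) u w * (x u * x w) ≤ 1 := by
      intro u w
      have h1 : x u * x w ≤ 1 := by
        have := hSbd x hx u; have := hSbd x hx w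
        have : |x u * x w| ≤ 1 := by
          rw [abs_mul]
          exact mul_le_one₀ (hSbd x hx u) (abs_nonneg _) (hSbd x hx w)
        exact le_trans (le_abs_self _) this
      by_cases h : G.Adj u w
      · simpa [SimpleGraph.adjMatrix_apply, h] using h1
      · simp [SimpleGraph.adjMatrix_apply, h]
    calc ∑ u, ∑ w, (G.adjMatrix ℝ) u w * (x u * x w)
        ≤ ∑ _u : V, ∑ _w : V, (1:ℝ) :=
          Finset.sum_le_sum fun u _ => Finset.sum_le_sum fun w _ => hterm u w
      _ = N ^ 2 := by simp [hN, sq]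
  have hcub : ∀ v, c v ≤ N := by
    intro v
    have := G.degree_lt_card_verts v
    have : (G.degree v : ℝ) < N := by rw [hN]; exact_mod_cast this
    simp only [hc]; linarith
  have hcsum0 : ∀ x : V → ℝ, 0 ≤ ∑ v, c v * x v ^ 2 := by
    intro x
    refine Finset.sum_nonneg fun v _ => ?_
    have := hc1 v; nlinarith [sq_nonneg (x v)]
  have hcsumN : ∀ x ∈ S, ∑ v, c v * x v ^ 2 ≤ N := by
    intro x hx
    have h1 : ∑ v, c v * x v ^ 2 ≤ ∑ v, N * x v ^ 2 :=
      Finset.sum_le_sum fun v _ => mul_le_mul_of_nonneg_right (hcub v) (sq_nonneg _)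
    have h2 : ∑ v, N * x v ^ 2 = N := by
      rw [← Finset.mul_sum, ← hdot_sq, hx, mul_one]
    linarith
  -- the sup function
  set h : ℝ → ℝ := fun t => sSup ((fun x => x ⬝ᵥ (M t *ᵥ x)) '' S) with hh
  have hBdd : ∀ t, BddAbove ((fun x => x ⬝ᵥ (M t *ᵥ x)) '' S) := fun t =>
    (hScompact.image (hcont (M t))).bddAbove
  have hub : ∀ t, ∀ x ∈ S, x ⬝ᵥ (M t *ᵥ x) ≤ h t := fun t x hx =>
    le_csSup (hBdd t) ⟨x, hx, rfl⟩
  have hlub : ∀ t b, (∀ x ∈ S, x ⬝ᵥ (M t *ᵥ x) ≤ b) → h t ≤ b := by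
    intro t b hb
    refine csSup_le (hSne.image _) ?_
    rintro _ ⟨x, hx, rfl⟩
    exact hb x hx
  -- the key claim: the Rayleigh quotient of `M ρ` is bounded by `ρ` on the sphere
  have hsphere : ∀ x ∈ S, x ⬝ᵥ (M ρ *ᵥ x) ≤ ρ := by
    by_contra hcon
    push_neg at hcon
    obtain ⟨x0, hx0S, hx0⟩ := hcon
    set T : ℝ := max (N ^ 2 + 1) (ρ + 1) with hT
    have hρT : ρ ≤ T := le_trans (by linarith) (le_max_right _ _)
    have hT1 : N ^ 2 + 1 ≤ T := le_max_left _ _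
    set L : ℝ := N / (ρ * ρ) with hL
    have hL0 : 0 ≤ L := by positivity
    have hfdiff : ∀ t ∈ Set.Icc ρ T, ∀ s ∈ Set.Icc ρ T, ∀ x ∈ S,
        x ⬝ᵥ (M t *ᵥ x) - x ⬝ᵥ (M s *ᵥ x) ≤ L * |t - s| := by
      intro t ht s hs x hx
      have htpos : 0 < t := lt_of_lt_of_le hρpos ht.1
      have hspos : 0 < s := lt_of_lt_of_le hρpos hs.1
      rw [hq1, hq1]
      have hQ0 := hcsum0 x
      have hQN := hcsumN x hx
      have hinv : |s⁻¹ - t⁻¹| ≤ |t - s| / (ρ * ρ) := by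
        have heq : s⁻¹ - t⁻¹ = (t - s) / (s * t) := by field_simp
        rw [heq, abs_div, abs_of_pos (mul_pos hspos htpos)]
        have hst : ρ * ρ ≤ s * t := by nlinarith [hs.1, ht.1, hρpos.le]
        have hρρ : 0 < ρ * ρ := mul_pos hρpos hρpos
        exact div_le_div_of_nonneg_left (abs_nonneg _) hρρ hst
      have h1 : x ⬝ᵥ (G.adjMatrix ℝ *ᵥ x) - t⁻¹ * ∑ v, c v * x v ^ 2
          - (x ⬝ᵥ (G.adjMatrix ℝ *ᵥ x) - s⁻¹ * ∑ v, c v * x v ^ 2)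
          = (s⁻¹ - t⁻¹) * ∑ v, c v * x v ^ 2 := by ring
      rw [h1]
      calc (s⁻¹ - t⁻¹) * ∑ v, c v * x v ^ 2
          ≤ |s⁻¹ - t⁻¹| * ∑ v, c v * x v ^ 2 :=
            mul_le_mul_of_nonneg_right (le_abs_self _) hQ0
        _ ≤ (|t - s| / (ρ * ρ)) * N := by
            apply mul_le_mul hinv hQN hQ0
            positivity
        _ = L * |t - s| := by rw [hL]; ring
    have hLip : LipschitzOnWith (Real.toNNReal L) h (Set.Icc ρ T) := by
      rw [lipschitzOnWith_iff_dist_le_mul]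
      intro t ht s hs
      rw [Real.dist_eq, Real.dist_eq, Real.coe_toNNReal _ hL0, abs_sub_le_iff]
      constructor
      · have hle : h t ≤ h s + L * |t - s| := by
          apply hlub
          intro x hx
          have := hfdiff t ht s hs x hx
          have := hub s x hx
          linarith
        linarith
      · have hle : h s ≤ h t + L * |t - s| := by
          apply hlub
          intro x hx
          have h2 := hfdiff s hs t ht x hx
          rw [abs_sub_comm] at h2
          have := hub t x hx
          linarith
        linarith
    have hgcont : ContinuousOn (fun t => h t - t) (Set.Icc ρ T) :=
      hLip.continuousOn.sub continuousOn_id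
    have hgρ : 0 < h ρ - ρ := by
      have := hub ρ x0 hx0S
      linarith
    have hgT : h T - T ≤ -1 := by
      have hTpos : 0 < T := lt_of_lt_of_le hρpos hρT
      have hhT : h T ≤ N ^ 2 := by
        apply hlub
        intro x hx
        rw [hq1]
        have := hAbound x hx
        have := hcsum0 x
        have hTinv : 0 ≤ T⁻¹ := by positivity
        nlinarith
      linarith
    have h0mem : (0:ℝ) ∈ Set.Icc ((fun t => h t - t) T) ((fun t => h t - t) ρ) :=
      ⟨by simpa using by linarith, by simpa using hgρ.le⟩
    obtain ⟨tstar, htmem, htg⟩ := intermediate_value_Icc' hρT hgcont h0mem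
    have htg' : h tstar = tstar := by
      have : h tstar - tstar = 0 := htg
      linarith
    have htstar_gt : ρ < tstar := by
      rcases lt_or_eq_of_le htmem.1 with hlt | heq
      · exact hlt
      · exfalso; rw [← heq] at htg'; linarith
    obtain ⟨xs, hxsS, hxsmax⟩ :=
      hScompact.exists_isMaxOn hSne ((hcont (M tstar)).continuousOn)
    have hsup : h tstar = xs ⬝ᵥ (M tstar *ᵥ xs) :=
      le_antisymm (hlub _ _ fun x hx => hxsmax hx) (hub _ _ hxsS)
    have hxs1 : xs ⬝ᵥ xs = 1 := hxsS
    have hub' : ∀ v : V → ℝ, v ⬝ᵥ (M tstar *ᵥ v) ≤ tstar * (v ⬝ᵥ v) := by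
      apply rayleigh_bound_of_sphere
      intro x hx
      calc x ⬝ᵥ (M tstar *ᵥ x) ≤ h tstar := hub _ x hx
        _ = tstar := htg'
    have heig : M tstar *ᵥ xs = tstar • xs := by
      apply eigen_of_rayleigh_max (hMherm tstar) hub'
      rw [hxs1, mul_one, ← hsup, htg']
    have hxs0 : xs ≠ 0 := by
      intro h0
      rw [h0] at hxs1
      simp [dotProduct] at hxs1
    exact hnoeig tstar htstar_gt xs hxs0 heig
  -- global Rayleigh bound
  have hubρ : ∀ v : V → ℝ, v ⬝ᵥ (M ρ *ᵥ v) ≤ ρ * (v ⬝ᵥ v) :=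
    rayleigh_bound_of_sphere fun x hx => hsphere x hx
  -- the absolute value vector
  set z : V → ℝ := fun v => |y v| with hz
  have hzzyy : z ⬝ᵥ z = y ⬝ᵥ y := by
    rw [dotProduct, dotProduct]
    exact Finset.sum_congr rfl fun v _ => abs_mul_abs_self (y v)
  have hcz : ∑ v, c v * z v ^ 2 = ∑ v, c v * y v ^ 2 :=
    Finset.sum_congr rfl fun v _ => by rw [hz]; simp [sq_abs]
  have hAz : y ⬝ᵥ (G.adjMatrix ℝ *ᵥ y) ≤ z ⬝ᵥ (G.adjMatrix ℝ *ᵥ z) := by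
    rw [hAqexp, hAqexp]
    refine Finset.sum_le_sum fun u _ => Finset.sum_le_sum fun w _ => ?_
    have h1 : y u * y w ≤ z u * z w := by
      calc y u * y w ≤ |y u * y w| := le_abs_self _
        _ = |y u| * |y w| := abs_mul _ _
        _ = z u * z w := rfl
    exact mul_le_mul_of_nonneg_left h1 (hAnn u w)
  have hqy : y ⬝ᵥ (M ρ *ᵥ y) = ρ * (y ⬝ᵥ y) := by
    rw [hMy, dotProduct_smul, smul_eq_mul]
  have hqz : ρ * (z ⬝ᵥ z) ≤ z ⬝ᵥ (M ρ *ᵥ z) := by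
    rw [hq1 ρ y] at hqy
    rw [hq1 ρ z, hzzyy, ← hqy, hcz]
    linarith
  have hMz : M ρ *ᵥ z = ρ • z := eigen_of_rayleigh_max (hMherm ρ) hubρ hqz
  have hadjz : ∀ u v : V, G.Adj u v → z u = 0 → z v = 0 := by
    intro u v huv hu
    have h1 := congrFun hMz u
    simp only [hM, sub_mulVec, smul_mulVec, Pi.sub_apply, Pi.smul_apply, smul_eq_mul,
      mulVec_diagonal, SimpleGraph.adjMatrix_mulVec_apply] at h1
    rw [hu] at h1
    have hsum : ∑ w ∈ G.neighborFinset u, z w = 0 := by simpa using h1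
    exact (Finset.sum_eq_zero_iff_of_nonneg fun w _ => abs_nonneg (y w)).mp hsum v
      (by rwa [SimpleGraph.mem_neighborFinset])
  have hwalkzero : ∀ (u v' : V) (p : G.Walk u v'), z u = 0 → z v' = 0 := by
    intro u v' p
    induction p with
    | nil => exact id
    | cons hadj' p ih => exact fun h0 => ih (hadjz _ _ hadj' h0)
  have hzpos : ∀ v, 0 < z v := by
    intro v
    rcases lt_or_eq_of_le (abs_nonneg (y v)) with hlt | heq
    · exact hlt
    · exfalso
      obtain ⟨v0, hv0⟩ := Function.ne_iff.mp hy0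
      have hzv0 : z v0 ≠ 0 := by simpa [hz] using hv0
      obtain ⟨p⟩ := hconn.preconnected v v0
      exact hzv0 (hwalkzero v v0 p heq.symm)
  exact ⟨z, hzpos, (K_eigen_iff G hρne z).mpr hMz⟩
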